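/- Let π be a coupling of probability measures μ and ν on ℝ such that |x - x'| ≤ Δ for π-almost every (x, x'). Let p_θ be the Laplace density with scale θ > 0 and ε > 0. Then for every y ∈ ℝ: ∫ p_θ(y - x) dπ(x,x') - e^ε ∫ p_θ(y - x') dπ(x,x') ≤ (e^{Δ/θ} - e^ε) · ∫ p_θ(y - x') dπ(x,x'). -/

import Mathlib

open MeasureTheory

/-- The Laplace density with scale parameter `θ`. -/
noncomputable def lap (θ z : ℝ) : ℝ := (1 / (2 * θ)) * Real.exp (-|z| / θ)

lemma lap_pos {θ : ℝ} (hθ : 0 < θ) (z : ℝ) : 0 < lap θ z := by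
  unfold lap; positivity

lemma lap_le_bound {θ : ℝ} (hθ : 0 < θ) (z : ℝ) : lap θ z ≤ 1 / (2 * θ) := by
  unfold lap
  have h1 : Real.exp (-|z| / θ) ≤ 1 := by
    rw [Real.exp_le_one_iff]
    have := abs_nonneg z
    have := div_nonpos_of_nonpos_of_nonneg (neg_nonpos.mpr this) hθ.le
    linarith
  exact mul_le_of_le_one_right (by positivity) h1

lemma lap_cont (θ : ℝ) : Continuous (lap θ) := by
  unfold lap
  fun_prop

lemma lap_le_mul {θ : ℝ} (hθ : 0 < θ) (a b : ℝ) :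
    lap θ a ≤ Real.exp (|a - b| / θ) * lap θ b := by
  unfold lap
  rw [show Real.exp (|a - b| / θ) * (1 / (2 * θ) * Real.exp (-|b| / θ))
      = 1 / (2 * θ) * (Real.exp (|a - b| / θ) * Real.exp (-|b| / θ)) by ring,
    ← Real.exp_add]
  have hpos : (0:ℝ) < 1 / (2 * θ) := by positivity
  apply mul_le_mul_of_nonneg_left _ hpos.le
  apply Real.exp_le_exp.mpr
  rw [← add_div]
  apply div_le_div_of_nonneg_right _ hθ.le
  have := abs_sub_abs_le_abs_sub b a
  rw [abs_sub_comm b a] at this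
  linarith

lemma lap_integrable {θ : ℝ} (hθ : 0 < θ) (π : Measure (ℝ × ℝ)) [IsProbabilityMeasure π]
    (y : ℝ) (f : ℝ × ℝ → ℝ) (hf : Continuous f) :
    Integrable (fun z => lap θ (y - f z)) π := by
  apply Integrable.mono' (integrable_const (1 / (2 * θ)))
  · exact ((lap_cont θ).comp (continuous_const.sub hf)).aestronglyMeasurable
  · filter_upwards with z
    rw [Real.norm_eq_abs, abs_of_pos (lap_pos hθ _)]
    exact lap_le_bound hθ _

/-- Master bound for the Laplace mechanism under a coupling: if `|x - x'| ≤ Δ`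
`π`-a.e., then the difference of the noised densities is bounded by
`(e^{Δ/θ} - e^ε)` times the second noised density. -/
theorem laplace_coupling_master_bound (π : Measure (ℝ × ℝ)) [IsProbabilityMeasure π]
    (Δ ε θ : ℝ) (hε : 0 < ε) (hθ : 0 < θ)
    (hsupp : ∀ᵐ z ∂π, |z.1 - z.2| ≤ Δ) (y : ℝ) :
    (∫ z, lap θ (y - z.1) ∂π) - Real.exp ε * ∫ z, lap θ (y - z.2) ∂π
      ≤ (Real.exp (Δ / θ) - Real.exp ε) * ∫ z, lap θ (y - z.2) ∂π := by
  have h1 : Integrable (fun z : ℝ × ℝ => lap θ (y - z.1)) π :=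
    lap_integrable hθ π y _ continuous_fst
  have h2 : Integrable (fun z : ℝ × ℝ => lap θ (y - z.2)) π :=
    lap_integrable hθ π y _ continuous_snd
  have key : (∫ z, lap θ (y - z.1) ∂π)
      ≤ Real.exp (Δ / θ) * ∫ z, lap θ (y - z.2) ∂π := by
    rw [← integral_const_mul]
    apply integral_mono_ae h1 (h2.const_mul _)
    filter_upwards [hsupp] with z hz
    calc lap θ (y - z.1) ≤ Real.exp (|(y - z.1) - (y - z.2)| / θ) * lap θ (y - z.2) :=
          lap_le_mul hθ _ _
      _ ≤ Real.exp (Δ / θ) * lap θ (y - z.2) := by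
          apply mul_le_mul_of_nonneg_right _ (lap_pos hθ _).le
          apply Real.exp_le_exp.mpr
          apply div_le_div_of_nonneg_right _ hθ.le
          simpa [abs_sub_comm] using hz
  linarith
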